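/- Let (H, G, φ, R) be a relative Rota-Baxter group and (K, L, φ|, R|) an ideal of it (so K ⊴ H, L ⊴ G, φ_g(K) ⊆ K for all g ∈ G, φ_ℓ(h)h⁻¹ ∈ K for all h ∈ H, ℓ ∈ L, and R(K) ⊆ L). Then the induced maps φ̄: G/L → Aut(H/K), with φ̄_{ḡ}(h̄) = conjugation class of φ_g(h), and R̄: H/K → G/L, R̄(h̄) = class of R(h), are well defined and make (H/K, G/L, φ̄, R̄) a relative Rota-Baxter group. -/

import Mathlib

/-- If `(K, L, φ|, R|)` is an ideal of the relative Rota-Baxter group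
`(H, G, φ, R)`, then there are well-defined induced maps
`φ̄ : G/L →* MulAut (H/K)` and `R̄ : H/K → G/L` (given on cosets by `φ` and `R`)
making `(H/K, G/L, φ̄, R̄)` a relative Rota-Baxter group. -/
theorem quotient_relative_RotaBaxter {H G : Type*} [Group H] [Group G]
    (φ : G →* MulAut H) (R : H → G)
    (hR : ∀ h₁ h₂ : H, R h₁ * R h₂ = R (h₁ * φ (R h₁) h₂))
    (K : Subgroup H) (L : Subgroup G) [K.Normal] [L.Normal]
    (hβK : ∀ (g : G), ∀ k ∈ K, φ g k ∈ K)
    (hLH : ∀ (h : H), ∀ ℓ ∈ L, φ ℓ h * h⁻¹ ∈ K)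
    (hRK : ∀ k ∈ K, R k ∈ L) :
    ∃ (φb : G ⧸ L →* MulAut (H ⧸ K)) (Rb : H ⧸ K → G ⧸ L),
      (∀ (g : G) (h : H),
        φb (QuotientGroup.mk g) (QuotientGroup.mk h) = QuotientGroup.mk (φ g h)) ∧
      (∀ h : H, Rb (QuotientGroup.mk h) = QuotientGroup.mk (R h)) ∧
      (∀ x y : H ⧸ K, Rb x * Rb y = Rb (x * φb (Rb x) y)) := by
  have hK : ∀ g : G, K ≤ K.comap (φ g).toMonoidHom := by
    intro g k hk; exact hβK g k hk
  -- the automorphism of H/K induced by φ g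
  let q : G → MulAut (H ⧸ K) := fun g =>
    { toFun := QuotientGroup.map K K (φ g).toMonoidHom (hK g)
      invFun := QuotientGroup.map K K (φ g⁻¹).toMonoidHom (hK g⁻¹)
      left_inv := by
        intro x
        refine QuotientGroup.induction_on x ?_
        intro h
        simp [QuotientGroup.map_mk]
      right_inv := by
        intro x
        refine QuotientGroup.induction_on x ?_
        intro h
        simp [QuotientGroup.map_mk]
      map_mul' := (QuotientGroup.map K K (φ g).toMonoidHom (hK g)).map_mul }
  have q_mk : ∀ (g : G) (h : H),
      q g (QuotientGroup.mk h) = QuotientGroup.mk (φ g h) := by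
    intro g h
    simp [q, QuotientGroup.map_mk]
  have qhom : ∀ g₁ g₂ : G, q (g₁ * g₂) = q g₁ * q g₂ := by
    intro g₁ g₂
    ext x
    refine QuotientGroup.induction_on x ?_
    intro h
    simp [q_mk, map_mul]
  have qL : ∀ ℓ ∈ L, MonoidHom.mk' q qhom ℓ = 1 := by
    intro ℓ hℓ
    ext x
    refine QuotientGroup.induction_on x ?_
    intro h
    show q ℓ (QuotientGroup.mk h) = QuotientGroup.mk h
    rw [q_mk, QuotientGroup.eq]
    have h1 : φ ℓ h * h⁻¹ ∈ K := hLH h ℓ hℓ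
    have h2 := Subgroup.Normal.conj_mem ‹K.Normal› _ (K.inv_mem h1) (φ ℓ h)⁻¹
    simpa [mul_assoc] using h2
  replace qL : L ≤ (MonoidHom.mk' q qhom).ker := fun ℓ hℓ => (MonoidHom.mem_ker).mpr (qL ℓ hℓ)
  have Rwd : ∀ a b : H, @Setoid.r H (QuotientGroup.leftRel K) a b →
      (QuotientGroup.mk (R a) : G ⧸ L) = QuotientGroup.mk (R b) := by
    intro a b hab
    have hk : a⁻¹ * b ∈ K := QuotientGroup.leftRel_apply.mp hab
    have hk' : φ (R a)⁻¹ (a⁻¹ * b) ∈ K := hβK (R a)⁻¹ _ hk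
    have : R a * R (φ (R a)⁻¹ (a⁻¹ * b)) = R b := by
      rw [hR]
      simp
    apply (QuotientGroup.eq).mpr
    rw [← this]
    simpa using hRK _ hk'
  set Rb : H ⧸ K → G ⧸ L := fun x => Quotient.liftOn' x (fun h => QuotientGroup.mk (R h)) Rwd
    with hRbdef
  have Rb_mk : ∀ h : H, Rb (QuotientGroup.mk h) = QuotientGroup.mk (R h) := fun _ => rfl
  refine ⟨QuotientGroup.lift L (MonoidHom.mk' q qhom) qL, Rb, ?_, Rb_mk, ?_⟩
  · intro g h
    simp [QuotientGroup.lift_mk, q_mk]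
  · intro x y
    refine QuotientGroup.induction_on x ?_
    intro h₁
    refine QuotientGroup.induction_on y ?_
    intro h₂
    rw [Rb_mk, Rb_mk]
    rw [← QuotientGroup.mk_mul, hR h₁ h₂]
    have : (QuotientGroup.mk h₁ : H ⧸ K) *
        (QuotientGroup.lift L (MonoidHom.mk' q qhom) qL) (QuotientGroup.mk (R h₁))
          (QuotientGroup.mk h₂) = QuotientGroup.mk (h₁ * φ (R h₁) h₂) := by
      rw [QuotientGroup.lift_mk]
      show (QuotientGroup.mk h₁ : H ⧸ K) * q (R h₁) (QuotientGroup.mk h₂) = _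
      rw [q_mk, QuotientGroup.mk_mul]
    rw [this, Rb_mk]
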